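/- Let N ≥ 1 and c ≥ 1 be integers, let I ⊆ {1,…,N} and K ⊆ {1,…,N} \ I with c ≤ N − |K|, and let X be a uniformly random subset of {1,…,N} of size c. Then for every integer r ≥ 0, Pr[|X ∩ I| ≥ r | X ∩ K = ∅] ≥ Pr[|X ∩ I| ≥ r]. -/

import Mathlib

open Finset

variable {α : Type*} [DecidableEq α]

/-- Number of `c`-subsets of `M` containing a fixed `s`-subset `Y`. -/
lemma superset_count (M Y : Finset α) (c : ℕ) (hYM : Y ⊆ M) (hYc : Y.card ≤ c) :
    ((M.powersetCard c).filter (fun Z => Y ⊆ Z)).card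
      = (M.card - Y.card).choose (c - Y.card) := by
  rw [← Finset.card_sdiff_of_subset hYM, ← Finset.card_powersetCard]
  apply Finset.card_bij (fun Z _ => Z \ Y)
  · intro Z hZ
    simp only [mem_filter, mem_powersetCard] at hZ
    obtain ⟨⟨hZM, hZc⟩, hYZ⟩ := hZ
    simp only [mem_powersetCard]
    exact ⟨sdiff_subset_sdiff hZM le_rfl, by rw [card_sdiff_of_subset hYZ, hZc]⟩
  · intro Z₁ h₁ Z₂ h₂ h
    simp only [mem_filter, mem_powersetCard] at h₁ h₂
    rw [← sdiff_union_of_subset h₁.2, ← sdiff_union_of_subset h₂.2, h]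
  · intro W hW
    simp only [mem_powersetCard] at hW
    refine ⟨W ∪ Y, ?_, ?_⟩
    · simp only [mem_filter, mem_powersetCard]
      have hdisj : Disjoint W Y := disjoint_of_subset_left hW.1 sdiff_disjoint
      refine ⟨⟨union_subset (hW.1.trans sdiff_subset) hYM, ?_⟩, subset_union_right⟩
      rw [card_union_of_disjoint hdisj, hW.2]
      omega
    · have hdisj : Disjoint W Y := disjoint_of_subset_left hW.1 sdiff_disjoint
      rw [union_sdiff_cancel_right hdisj]

/-- Key monotonicity: the proportion of `t`-subsets of `M` having at least `r`
elements in `I` is nondecreasing in `t`. -/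
lemma ratio_mono (M I : Finset α) (r s c : ℕ) (hsc : s ≤ c) (hcM : c ≤ M.card) :
    ((M.powersetCard s).filter (fun Y => r ≤ (Y ∩ I).card)).card * M.card.choose c
      ≤ ((M.powersetCard c).filter (fun Z => r ≤ (Z ∩ I).card)).card * M.card.choose s := by
  set As := (M.powersetCard s).filter (fun Y => r ≤ (Y ∩ I).card) with hAs
  set Ac := (M.powersetCard c).filter (fun Z => r ≤ (Z ∩ I).card) with hAc
  -- double counting pairs (Y, Z) with Y ∈ As, Z ⊇ Y of size c
  have key : As.card * (M.card - s).choose (c - s) ≤ Ac.card * c.choose s := by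
    have step1 : As.card * (M.card - s).choose (c - s)
        = ∑ Y ∈ As, ((M.powersetCard c).filter (fun Z => Y ⊆ Z)).card := by
      rw [Finset.sum_congr rfl fun Y hY => ?_, Finset.sum_const, smul_eq_mul]
      have hY' := Finset.mem_filter.1 hY
      have h := Finset.mem_powersetCard.1 hY'.1
      rw [superset_count M Y c h.1 (h.2 ▸ hsc), h.2]
    have step2 : ∑ Y ∈ As, ((M.powersetCard c).filter (fun Z => Y ⊆ Z)).card
        = ∑ Z ∈ M.powersetCard c, (As.filter (fun Y => Y ⊆ Z)).card := by
      simp only [Finset.card_filter]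
      exact Finset.sum_comm
    rw [step1, step2]
    have step3 : ∀ Z ∈ M.powersetCard c,
        (As.filter (fun Y => Y ⊆ Z)).card
          ≤ if r ≤ (Z ∩ I).card then c.choose s else 0 := by
      intro Z hZ
      by_cases hr : r ≤ (Z ∩ I).card
      · rw [if_pos hr]
        have hsub : As.filter (fun Y => Y ⊆ Z) ⊆ Z.powersetCard s := by
          intro Y hY
          simp only [hAs, mem_filter, mem_powersetCard] at hY ⊢
          exact ⟨hY.2, hY.1.1.2⟩
        calc (As.filter (fun Y => Y ⊆ Z)).card ≤ (Z.powersetCard s).card :=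
              card_le_card hsub
          _ = c.choose s := by
              rw [card_powersetCard, (Finset.mem_powersetCard.1 hZ).2]
      · rw [if_neg hr]
        have : As.filter (fun Y => Y ⊆ Z) = ∅ := by
          rw [Finset.filter_eq_empty_iff]
          intro Y hY hYZ
          have hY' := (Finset.mem_filter.1 hY).2
          exact hr (hY'.trans (card_le_card (inter_subset_inter hYZ le_rfl)))
        simp [this]
    calc ∑ Z ∈ M.powersetCard c, (As.filter (fun Y => Y ⊆ Z)).card
        ≤ ∑ Z ∈ M.powersetCard c, (if r ≤ (Z ∩ I).card then c.choose s else 0) :=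
          Finset.sum_le_sum step3
      _ = Ac.card * c.choose s := by
          rw [← Finset.sum_filter, Finset.sum_const, smul_eq_mul]
  -- multiply by choose M.card s and use the trinomial identity
  have hpos : 0 < c.choose s := Nat.choose_pos hsc
  have h2 : As.card * (M.card - s).choose (c - s) * M.card.choose s
      ≤ Ac.card * c.choose s * M.card.choose s :=
    Nat.mul_le_mul_right _ key
  have hid : M.card.choose c * c.choose s
      = M.card.choose s * (M.card - s).choose (c - s) := Nat.choose_mul hsc
  refine Nat.le_of_mul_le_mul_right ?_ hpos
  calc As.card * M.card.choose c * c.choose s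
      = As.card * (M.card - s).choose (c - s) * M.card.choose s := by
        rw [mul_assoc, hid]; ring
    _ ≤ Ac.card * c.choose s * M.card.choose s := h2
    _ = Ac.card * M.card.choose s * c.choose s := by ring

/-- The fiber `{X : |X| = c, X ⊆ U, X ∩ K = S, q (X \ K)}` is in bijection with
`{Y : |Y| = c - |S|, Y ⊆ U \ K, q Y}`. -/
lemma fiber_card (U K S : Finset α) (hKU : K ⊆ U) (hSK : S ⊆ K) (c : ℕ)
    (hSc : S.card ≤ c)
    (q : Finset α → Prop) [DecidablePred q] :
    ((U.powersetCard c).filter (fun X => q (X \ K) ∧ X ∩ K = S)).card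
      = (((U \ K).powersetCard (c - S.card)).filter q).card := by
  apply Finset.card_bij (fun X _ => X \ K)
  · intro X hX
    simp only [mem_filter, mem_powersetCard] at hX ⊢
    obtain ⟨⟨hXU, hXc⟩, hq, hXK⟩ := hX
    refine ⟨⟨sdiff_subset_sdiff hXU le_rfl, ?_⟩, hq⟩
    have := Finset.card_sdiff_add_card_inter X K
    rw [hXK] at this
    omega
  · intro X₁ h₁ X₂ h₂ h
    simp only [mem_filter, mem_powersetCard] at h₁ h₂
    rw [← Finset.sdiff_union_inter X₁ K, ← Finset.sdiff_union_inter X₂ K,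
      h, h₁.2.2, h₂.2.2]
  · intro Y hY
    simp only [mem_filter, mem_powersetCard] at hY
    obtain ⟨⟨hYU, hYc⟩, hq⟩ := hY
    have hdisjYK : Disjoint Y K := disjoint_of_subset_left hYU sdiff_disjoint
    have hdisjYS : Disjoint Y S := hdisjYK.mono_right hSK
    refine ⟨Y ∪ S, ?_, ?_⟩
    · simp only [mem_filter, mem_powersetCard]
      have hXK : (Y ∪ S) ∩ K = S := by
        rw [union_inter_distrib_right, Finset.disjoint_iff_inter_eq_empty.1 hdisjYK,
          inter_eq_left.2 hSK, empty_union]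
      have hXdK : (Y ∪ S) \ K = Y := by
        rw [union_sdiff_distrib, sdiff_eq_self_of_disjoint hdisjYK,
          sdiff_eq_empty_iff_subset.2 hSK, union_empty]
      refine ⟨⟨union_subset (hYU.trans sdiff_subset) (hSK.trans hKU), ?_⟩,
        by rw [hXdK]; exact hq, hXK⟩
      rw [card_union_of_disjoint hdisjYS, hYc]
      omega
    · rw [union_sdiff_distrib, sdiff_eq_self_of_disjoint hdisjYK,
        sdiff_eq_empty_iff_subset.2 hSK, union_empty]

/-- Let `X` be a uniformly random subset of `{1,…,N}` of size `c`,
`I ⊆ {1,…,N}` and `K ⊆ {1,…,N} \ I` with `c ≤ N − |K|`. Then for every `r ≥ 0`,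
`Pr[|X ∩ I| ≥ r | X ∩ K = ∅] ≥ Pr[|X ∩ I| ≥ r]`. -/
theorem conditional_count_lower_bound (N c : ℕ) (hN : 1 ≤ N) (hc : 1 ≤ c)
    (I K : Finset (Fin N)) (hK : K ⊆ Finset.univ \ I) (hcK : c ≤ N - K.card)
    (r : ℕ) :
    ((((Finset.univ : Finset (Fin N)).powersetCard c).filter
          (fun X => r ≤ (X ∩ I).card)).card : ℝ) /
        (((Finset.univ : Finset (Fin N)).powersetCard c).card : ℝ) ≤
      ((((Finset.univ : Finset (Fin N)).powersetCard c).filter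
          (fun X => r ≤ (X ∩ I).card ∧ X ∩ K = ∅)).card : ℝ) /
        ((((Finset.univ : Finset (Fin N)).powersetCard c).filter
          (fun X => X ∩ K = ∅)).card : ℝ) := by
  classical
  set U : Finset (Fin N) := Finset.univ
  set M : Finset (Fin N) := U \ K with hM
  have hUcard : U.card = N := by simp [U]
  have hKU : K ⊆ U := subset_univ K
  have hMcard : M.card = N - K.card := by
    rw [hM, card_sdiff_of_subset hKU, hUcard]
  have hcM : c ≤ M.card := hMcard ▸ hcK
  have hcN : c ≤ N := hcK.trans (Nat.sub_le _ _)
  -- intersection with I sees only the part outside K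
  have hXI : ∀ X : Finset (Fin N), (X \ K) ∩ I = X ∩ I := by
    intro X
    ext a
    simp only [mem_inter, mem_sdiff]
    constructor
    · rintro ⟨⟨ha, -⟩, hi⟩; exact ⟨ha, hi⟩
    · rintro ⟨ha, hi⟩
      exact ⟨⟨ha, fun hk => (Finset.mem_sdiff.1 (hK hk)).2 hi⟩, hi⟩
  -- cardinalities of the conditioned sets
  have hB : ((U.powersetCard c).filter (fun X => X ∩ K = ∅)).card
      = M.card.choose c := by
    have h := fiber_card U K ∅ hKU (empty_subset K) c (by simp) (fun _ => True)
    simpa [hM, Finset.card_powersetCard] using h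
  have hAB : ((U.powersetCard c).filter (fun X => r ≤ (X ∩ I).card ∧ X ∩ K = ∅)).card
      = ((M.powersetCard c).filter (fun Y => r ≤ (Y ∩ I).card)).card := by
    have h := fiber_card U K ∅ hKU (empty_subset K) c (by simp)
      (fun Y => r ≤ (Y ∩ I).card)
    simp only [card_empty, Nat.sub_zero, ← hM] at h
    rw [← h]
    congr 1
    apply Finset.filter_congr
    intro X _
    rw [hXI X]
  set A := (U.powersetCard c).filter (fun X => r ≤ (X ∩ I).card) with hA
  set Ac := (M.powersetCard c).filter (fun Y => r ≤ (Y ∩ I).card) with hAc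
  -- main counting inequality
  have hmain : A.card * M.card.choose c ≤ Ac.card * N.choose c := by
    have hfib : A.card
        = ∑ S ∈ K.powerset, (A.filter (fun X => X ∩ K = S)).card :=
      Finset.card_eq_sum_card_fiberwise
        (fun X _ => Finset.mem_powerset.2 inter_subset_right)
    have hT : ∑ S ∈ K.powerset,
        ((U.powersetCard c).filter (fun X => X ∩ K = S)).card = N.choose c := by
      rw [← Finset.card_eq_sum_card_fiberwise
        (fun X _ => Finset.mem_powerset.2 inter_subset_right),
        card_powersetCard, hUcard]
    have hpt : ∀ S ∈ K.powerset,
        (A.filter (fun X => X ∩ K = S)).card * M.card.choose c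
          ≤ Ac.card * ((U.powersetCard c).filter (fun X => X ∩ K = S)).card := by
      intro S hS
      have hSK : S ⊆ K := Finset.mem_powerset.1 hS
      by_cases hSc : S.card ≤ c
      · have e1 : A.filter (fun X => X ∩ K = S)
            = (U.powersetCard c).filter
                (fun X => r ≤ ((X \ K) ∩ I).card ∧ X ∩ K = S) := by
          rw [hA, Finset.filter_filter]
          apply Finset.filter_congr
          intro X _
          rw [hXI X]
        have e2 := fiber_card U K S hKU hSK c hSc (fun Y => r ≤ (Y ∩ I).card)
        have e3 : ((U.powersetCard c).filter (fun X => X ∩ K = S)).card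
            = M.card.choose (c - S.card) := by
          have h := fiber_card U K S hKU hSK c hSc (fun _ => True)
          simpa [hM, Finset.card_powersetCard] using h
        rw [e1, e2, ← hM, e3]
        exact ratio_mono M I r (c - S.card) c (Nat.sub_le c _) hcM
      · have : A.filter (fun X => X ∩ K = S) = ∅ := by
          rw [Finset.filter_eq_empty_iff]
          intro X hX h
          have hXc : X.card = c :=
            (Finset.mem_powersetCard.1 (Finset.mem_filter.1 hX).1).2
          have : S.card ≤ c := by
            rw [← h, ← hXc]
            exact card_le_card inter_subset_left
          exact hSc this
        simp [this]
    calc A.card * M.card.choose c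
        = ∑ S ∈ K.powerset,
            (A.filter (fun X => X ∩ K = S)).card * M.card.choose c := by
          rw [hfib, Finset.sum_mul]
      _ ≤ ∑ S ∈ K.powerset,
            Ac.card * ((U.powersetCard c).filter (fun X => X ∩ K = S)).card :=
          Finset.sum_le_sum hpt
      _ = Ac.card * N.choose c := by rw [← Finset.mul_sum, hT]
  -- conclude over the reals
  have hTcard : (U.powersetCard c).card = N.choose c := by
    rw [card_powersetCard, hUcard]
  have hTpos : (0 : ℝ) < ((U.powersetCard c).card : ℝ) := by
    rw [hTcard]
    exact_mod_cast Nat.choose_pos hcN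
  have hBpos : (0 : ℝ)
      < (((U.powersetCard c).filter (fun X => X ∩ K = ∅)).card : ℝ) := by
    rw [hB]
    exact_mod_cast Nat.choose_pos hcM
  rw [div_le_div_iff₀ hTpos hBpos]
  rw [hB, hAB, hTcard]
  exact_mod_cast hmain
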